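/- If D : ℝⁿ → ℝⁿ is differentiable, locally homogeneous (i.e., J_D(x)x = D(x) for all x) and has symmetric Jacobian, then the RED functional h(x) = (1/2)xᵀ(x − D(x)) satisfies ∇h(x) = x − D(x). -/

import Mathlib

open RealInnerProductSpace

/-- If `D` is differentiable, locally homogeneous (`J_D(x)x = D(x)`) and has symmetric
Jacobian, then the RED functional `h(x) = (1/2)⟪x, x − D(x)⟫` satisfies
`∇h(x) = x − D(x)`. -/
theorem red_gradient_homogeneous_symmetric (n : ℕ)
    (D : EuclideanSpace ℝ (Fin n) → EuclideanSpace ℝ (Fin n))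
    (J : EuclideanSpace ℝ (Fin n) →
      EuclideanSpace ℝ (Fin n) →L[ℝ] EuclideanSpace ℝ (Fin n))
    (hD : ∀ x, HasFDerivAt D (J x) x)
    (hhom : ∀ x, (J x) x = D x)
    (hsym : ∀ x, ContinuousLinearMap.adjoint (J x) = J x)
    (h : EuclideanSpace ℝ (Fin n) → ℝ)
    (hh : ∀ x, h x = (1/2) * ⟪x, x - D x⟫) :
    ∀ x, HasGradientAt h (x - D x) x := by
  intro x
  rw [hasGradientAt_iff_hasFDerivAt]
  have hid : HasFDerivAt (fun y : EuclideanSpace ℝ (Fin n) => y)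
      (ContinuousLinearMap.id ℝ _) x := hasFDerivAt_id x
  have hg : HasFDerivAt (fun y => y - D y)
      (ContinuousLinearMap.id ℝ _ - J x) x := hid.sub (hD x)
  have hinner := (hid.inner ℝ hg).const_mul (1/2 : ℝ)
  have heq : h = fun y => (1/2 : ℝ) * ⟪y, y - D y⟫ := funext hh
  rw [heq]
  convert hinner using 1
  · rfl
  apply ContinuousLinearMap.ext; intro v
  have hJ : ⟪x, (J x) v⟫ = ⟪D x, v⟫ := by
    rw [← hhom x, ← ContinuousLinearMap.adjoint_inner_left, hsym]
  simp only [InnerProductSpace.toDual_apply_apply, ContinuousLinearMap.coe_smul',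
    Pi.smul_apply, ContinuousLinearMap.coe_comp', Function.comp_apply,
    ContinuousLinearMap.prod_apply, fderivInnerCLM_apply, ContinuousLinearMap.id_apply,
    ContinuousLinearMap.sub_apply, smul_eq_mul, inner_sub_left, inner_sub_right, hJ,
    real_inner_comm v x, real_inner_comm v (D x)]
  ring
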